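/- If α = β and k = l, the Bézier coefficients of the constrained dual Bernstein polynomials satisfy the symmetry C_{ij}(n, k, k, α, α) = C_{n-i, n-j}(n, k, k, α, α) for k ≤ i, j ≤ n-k. -/

import Mathlib

open Finset

/-- Pochhammer symbol `(c)_k = c (c+1) ⋯ (c+k-1)`. -/
noncomputable def poch (c : ℝ) (k : ℕ) : ℝ := ∏ j ∈ Finset.range k, (c + j)

/-- Bernstein polynomial `B^n_i(x)`. -/
noncomputable def bern (n i : ℕ) (x : ℝ) : ℝ := (n.choose i : ℝ) * x ^ i * (1 - x) ^ (n - i)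

/-- Jacobi inner product on [0,1]. -/
noncomputable def jip (α β : ℝ) (f g : ℝ → ℝ) : ℝ :=
  ∫ x in (0:ℝ)..1, (1 - x) ^ α * x ^ β * f x * g x

/-- Beta function `B(a,b) = Γ(a)Γ(b)/Γ(a+b)`. -/
noncomputable def betaF (a b : ℝ) : ℝ := Real.Gamma a * Real.Gamma b / Real.Gamma (a + b)

/-- Hahn polynomial `Q_m(x; α, β, N)` as a terminating ₃F₂ sum. -/
noncomputable def hahn (m : ℕ) (x : ℝ) (α β : ℝ) (N : ℕ) : ℝ :=
  ∑ k ∈ Finset.range (m + 1),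
    poch (-(m : ℝ)) k * poch ((m : ℝ) + α + β + 1) k * poch (-x) k /
      ((k.factorial : ℝ) * poch (α + 1) k * poch (-(N : ℝ)) k)

/-- Shifted Jacobi polynomial `R_m^{(α,β)}(x)`. -/
noncomputable def sjac (m : ℕ) (α β : ℝ) (x : ℝ) : ℝ :=
  (poch (α + 1) m / (m.factorial : ℝ)) *
    ∑ k ∈ Finset.range (m + 1),
      poch (-(m : ℝ)) k * poch ((m : ℝ) + α + β + 1) k /
        ((k.factorial : ℝ) * poch (α + 1) k) * (1 - x) ^ k

open MeasureTheory intervalIntegral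

lemma wInt (α : ℝ) (hα : α > -1) :
    IntervalIntegrable (fun x : ℝ => (1 - x) ^ α * x ^ α) volume 0 1 := by
  have hc : IntervalIntegrable
      (fun x : ℝ => (x : ℂ) ^ ((α : ℂ) + 1 - 1) * ((1 : ℂ) - x) ^ ((α : ℂ) + 1 - 1))
      volume 0 1 := by
    apply Complex.betaIntegral_convergent <;> · simp; linarith
  rw [intervalIntegrable_iff, Set.uIoc_of_le (by norm_num : (0:ℝ) ≤ 1)] at hc ⊢
  have h3 : IntegrableOn
      (fun x : ℝ => ((x : ℂ) ^ ((α : ℂ) + 1 - 1) * ((1 : ℂ) - x) ^ ((α : ℂ) + 1 - 1)).re)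
      (Set.Ioc 0 1) volume := hc.re
  refine h3.congr_fun (fun x hx => ?_) measurableSet_Ioc
  obtain ⟨hx0, hx1⟩ := hx
  have e1 : ((x : ℂ)) ^ ((α : ℂ) + 1 - 1) = ((x ^ α : ℝ) : ℂ) := by
    rw [add_sub_cancel_right, Complex.ofReal_cpow hx0.le]
  have e2 : ((1 : ℂ) - x) ^ ((α : ℂ) + 1 - 1) = (((1 - x) ^ α : ℝ) : ℂ) := by
    rw [add_sub_cancel_right, Complex.ofReal_cpow (by linarith)]
    push_cast; ring_nf
  beta_reduce; rw [e1, e2, ← Complex.ofReal_mul, Complex.ofReal_re, mul_comm]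

lemma bern_cont (n i : ℕ) : Continuous (bern n i) := by
  unfold bern; fun_prop

lemma bb_int (α : ℝ) (hα : α > -1) (n a b : ℕ) :
    IntervalIntegrable (fun x : ℝ => (1 - x) ^ α * x ^ α * bern n a x * bern n b x)
      volume 0 1 := by
  have h := (wInt α hα).mul_continuousOn
    (((bern_cont n a).mul (bern_cont n b)).continuousOn (s := Set.uIcc 0 1))
  refine h.congr_ae (Filter.Eventually.of_forall fun x => ?_)
  simp [mul_assoc]

lemma jip_sum (α : ℝ) (hα : α > -1) (n m : ℕ) (s : Finset ℕ) (c : ℕ → ℝ) :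
    jip α α (fun x => ∑ j ∈ s, c j * bern n j x) (bern n m)
      = ∑ j ∈ s, c j * jip α α (bern n j) (bern n m) := by
  unfold jip
  have key : (∫ x in (0:ℝ)..1,
      ∑ j ∈ s, c j * ((1 - x) ^ α * x ^ α * bern n j x * bern n m x))
      = ∑ j ∈ s, ∫ x in (0:ℝ)..1, c j * ((1 - x) ^ α * x ^ α * bern n j x * bern n m x) := by
    apply intervalIntegral.integral_finset_sum
    intro j _
    exact (bb_int α hα n j m).const_mul (c j)
  calc (∫ x in (0:ℝ)..1, (1 - x) ^ α * x ^ α * (∑ j ∈ s, c j * bern n j x) * bern n m x)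
      = ∫ x in (0:ℝ)..1, ∑ j ∈ s, c j * ((1 - x) ^ α * x ^ α * bern n j x * bern n m x) := by
        congr 1; funext x
        rw [Finset.mul_sum, Finset.sum_mul]
        exact Finset.sum_congr rfl fun j _ => by ring
    _ = ∑ j ∈ s, ∫ x in (0:ℝ)..1, c j * ((1 - x) ^ α * x ^ α * bern n j x * bern n m x) := key
    _ = ∑ j ∈ s, c j * ∫ x in (0:ℝ)..1, (1 - x) ^ α * x ^ α * bern n j x * bern n m x := by
        exact Finset.sum_congr rfl fun j _ => intervalIntegral.integral_const_mul _ _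

lemma jip_reverse (α : ℝ) (n a b : ℕ) (ha : a ≤ n) (hb : b ≤ n) :
    jip α α (bern n (n - a)) (bern n (n - b)) = jip α α (bern n a) (bern n b) := by
  unfold jip
  have h := intervalIntegral.integral_comp_sub_left
    (f := fun x : ℝ => (1 - x) ^ α * x ^ α * bern n a x * bern n b x) (a := 0) (b := 1) 1
  simp only [sub_zero, sub_self] at h
  rw [← h]
  congr 1; funext x
  have hx : (1 : ℝ) - (1 - x) = x := by ring
  unfold bern
  rw [hx, Nat.choose_symm ha, Nat.choose_symm hb, Nat.sub_sub_self ha, Nat.sub_sub_self hb]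
  ring


theorem constrained_bezier_coefficients_symmetry (α : ℝ) (hα : α > -1)
    (n k : ℕ) (hkl : k + k ≤ n)
    (Dc : ℕ → Polynomial ℝ)
    (hdeg : ∀ i, k ≤ i → i ≤ n - k → (Dc i).natDegree ≤ n)
    (h0 : ∀ i, k ≤ i → i ≤ n - k → ∀ r < k, (Polynomial.derivative^[r] (Dc i)).eval 0 = 0)
    (h1 : ∀ i, k ≤ i → i ≤ n - k → ∀ r < k, (Polynomial.derivative^[r] (Dc i)).eval 1 = 0)
    (hdual : ∀ i, k ≤ i → i ≤ n - k → ∀ j, k ≤ j → j ≤ n - k →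
      jip α α (fun x => (Dc i).eval x) (bern n j) = if i = j then 1 else 0)
    (C : ℕ → ℕ → ℝ)
    (hC : ∀ i, k ≤ i → i ≤ n - k → ∀ x : ℝ,
      (Dc i).eval x = ∑ j ∈ Finset.Icc k (n - k), C i j * bern n j x)
    (i j : ℕ) (hik : k ≤ i) (hin : i ≤ n - k) (hjk : k ≤ j) (hjn : j ≤ n - k) :
    C i j = C (n - i) (n - j) := by
  set s : Finset ℕ := Finset.Icc k (n - k) with hs
  have hmem : ∀ a : ℕ, a ∈ s → n - a ∈ s := by
    intro a ha
    rw [hs, Finset.mem_Icc] at ha ⊢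
    omega
  have hle : ∀ a : ℕ, a ∈ s → a ≤ n := by
    intro a ha; rw [hs, Finset.mem_Icc] at ha; omega
  have hinv : ∀ a : ℕ, a ∈ s → n - (n - a) = a := by
    intro a ha; have := hle a ha; omega
  -- the reversal permutation on the index subtype
  let e : Equiv.Perm {x // x ∈ s} :=
    ⟨fun a => ⟨n - a.1, hmem a.1 a.2⟩, fun a => ⟨n - a.1, hmem a.1 a.2⟩,
     fun a => Subtype.ext (hinv a.1 a.2), fun a => Subtype.ext (hinv a.1 a.2)⟩
  let Cm : Matrix {x // x ∈ s} {x // x ∈ s} ℝ := fun a b => C a.1 b.1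
  let G : Matrix {x // x ∈ s} {x // x ∈ s} ℝ := fun a b => jip α α (bern n a.1) (bern n b.1)
  have hks : ∀ a : ℕ, a ∈ s → k ≤ a ∧ a ≤ n - k := by
    intro a ha; rwa [hs, Finset.mem_Icc] at ha
  have hCG : Cm * G = 1 := by
    ext ⟨a, ha⟩ ⟨b, hb⟩
    rw [Matrix.mul_apply]
    have h1 : ∑ x : {x // x ∈ s}, Cm ⟨a, ha⟩ x * G x ⟨b, hb⟩
        = ∑ x ∈ s, C a x * jip α α (bern n x) (bern n b) := by
      rw [← Finset.sum_attach s (fun x => C a x * jip α α (bern n x) (bern n b))]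
      rfl
    rw [h1, ← jip_sum α hα n b s (C a)]
    have h2 : (fun x => ∑ j ∈ s, C a j * bern n j x) = fun x => (Dc a).eval x := by
      funext x; rw [hC a (hks a ha).1 (hks a ha).2 x]
    rw [h2, hdual a (hks a ha).1 (hks a ha).2 b (hks b hb).1 (hks b hb).2]
    simp [Matrix.one_apply, Subtype.ext_iff]
  have hGC : G * Cm = 1 := mul_eq_one_comm.mp hCG
  -- the reversed matrix
  let Cm' : Matrix {x // x ∈ s} {x // x ∈ s} ℝ := fun a b => Cm (e a) (e b)
  have hGrev : ∀ a b : {x // x ∈ s}, G (e a) b = G a (e b) := by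
    intro a b
    show jip α α (bern n (n - a.1)) (bern n b.1) = jip α α (bern n a.1) (bern n (n - b.1))
    have := jip_reverse α n a.1 (n - b.1) (hle a.1 a.2) (Nat.sub_le n b.1)
    rw [hinv b.1 b.2] at this
    exact this
  have hCG' : Cm' * G = 1 := by
    ext a b
    rw [Matrix.mul_apply]
    have h1 : ∑ x : {x // x ∈ s}, Cm' a x * G x b
        = ∑ x : {x // x ∈ s}, Cm (e a) (e (e x)) * G (e x) b :=
      (Equiv.sum_comp e (fun x => Cm (e a) (e x) * G x b)).symm
    rw [h1]
    have h2 : ∀ x : {x // x ∈ s}, Cm (e a) (e (e x)) * G (e x) b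
        = Cm (e a) x * G x (e b) := by
      intro x
      rw [show e (e x) = x from e.left_inv x, hGrev x b]
    rw [Finset.sum_congr rfl (fun x _ => h2 x), ← Matrix.mul_apply, hCG]
    simp [Matrix.one_apply, EmbeddingLike.apply_eq_iff_eq]
  have hfinal : Cm' = Cm := by
    calc Cm' = Cm' * (G * Cm) := by rw [hGC, Matrix.mul_one]
    _ = (Cm' * G) * Cm := by rw [Matrix.mul_assoc]
    _ = Cm := by rw [hCG', Matrix.one_mul]
  have hi : i ∈ s := by rw [hs, Finset.mem_Icc]; exact ⟨hik, hin⟩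
  have hj : j ∈ s := by rw [hs, Finset.mem_Icc]; exact ⟨hjk, hjn⟩
  have := congrFun (congrFun hfinal ⟨i, hi⟩) ⟨j, hj⟩
  exact this.symm
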